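/- Let f : ℝⁿ → ℝ be twice continuously differentiable and η ∈ ℝ. Let x_{k−m}, …, x_k ∈ ℝⁿ and real coefficients α_{k−m}, …, α_k with Σ_{j=k−m}^{k} α_j = 1, and set y = Σ_{j=k−m}^{k} α_j x_j. Define the averaged Hessians H_j = ∫₀¹ ∇²f(t x_j + (1−t) x_k) dt for j = k−m, …, k−1 and H = ∫₀¹ ∇²f(t x_k + (1−t) y) dt. Then Σ_{j=k−m}^{k} α_j (x_j − η∇f(x_j)) − (y − η∇f(y)) = η Σ_{j=k−m}^{k−1} α_j (H_j − H)(x_k − x_j). In particular, if ∇²f is constant (f quadratic), the left-hand side vanishes: the affine combination of gradient-descent updates equals the gradient-descent update of the affine combination. -/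

import Mathlib

open Finset

section Aux

variable {E : Type*} [NormedAddCommGroup E] [NormedSpace ℝ E] [CompleteSpace E]

/-- Mean value identity: for a `C¹` map `g`, the averaged derivative along the segment
from `v` to `u` applied to `u - v` equals `g u - g v`. -/
lemma avg_deriv_apply (g : E → E) (hg : ContDiff ℝ 1 g) (u v : E) :
    (∫ t in (0:ℝ)..1, fderiv ℝ g (t • u + (1 - t) • v)) (u - v) = g u - g v := by
  have hcont : Continuous fun t : ℝ => fderiv ℝ g (t • u + (1 - t) • v) := by
    apply (hg.continuous_fderiv one_ne_zero).comp
    continuity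
  have hswap : (∫ t in (0:ℝ)..1, fderiv ℝ g (t • u + (1 - t) • v)) (u - v)
      = ∫ t in (0:ℝ)..1, fderiv ℝ g (t • u + (1 - t) • v) (u - v) := by
    rw [intervalIntegral.integral_of_le zero_le_one,
        intervalIntegral.integral_of_le zero_le_one]
    exact ContinuousLinearMap.integral_apply
      (hcont.integrableOn_Ioc.integrable) (u - v)
  rw [hswap]
  have hderiv : ∀ t ∈ Set.uIcc (0:ℝ) 1,
      HasDerivAt (fun s : ℝ => g (s • u + (1 - s) • v))
        (fderiv ℝ g (t • u + (1 - t) • v) (u - v)) t := by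
    intro t _
    have hc : HasDerivAt (fun s : ℝ => s • u + (1 - s) • v) (u - v) t := by
      have h1 : HasDerivAt (fun s : ℝ => s • u) ((1:ℝ) • u) t :=
        (hasDerivAt_id t).smul_const u
      have h2 : HasDerivAt (fun s : ℝ => (1 - s) • v) ((-1:ℝ) • v) t := by
        have : HasDerivAt (fun s : ℝ => (1 - s)) (-1) t := by
          simpa using (hasDerivAt_id' t).const_sub (1:ℝ)
        exact this.smul_const v
      have := h1.add h2
      simpa [sub_eq_add_neg, Pi.add_def] using this
    have hgd : HasFDerivAt g (fderiv ℝ g (t • u + (1 - t) • v)) (t • u + (1 - t) • v) :=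
      ((hg.differentiable one_ne_zero) _).hasFDerivAt
    exact hgd.comp_hasDerivAt t hc
  have hint : IntervalIntegrable
      (fun t : ℝ => fderiv ℝ g (t • u + (1 - t) • v) (u - v)) MeasureTheory.volume 0 1 := by
    apply Continuous.intervalIntegrable
    exact (ContinuousLinearMap.apply ℝ E (u - v)).continuous.comp hcont
  have := intervalIntegral.integral_eq_sub_of_hasDerivAt hderiv hint
  simpa using this

end Aux

/-- **Averaged-Hessian identity for affine combinations of gradient-descent updates.**
For `f ∈ C²`, coefficients `α_j` summing to one, `y = Σ α_j x_j`, averaged Hessians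
`H_j = ∫₀¹ ∇²f(t x_j + (1−t) x_k) dt` and `H = ∫₀¹ ∇²f(t x_k + (1−t) y) dt`, one has
`Σ_j α_j (x_j − η∇f(x_j)) − (y − η∇f(y)) = η Σ_{j<k} α_j (H_j − H)(x_k − x_j)`.
In particular, the left-hand side vanishes when the Hessian is constant. -/
theorem aa_gd_averaged_hessian_identity
    (n m : ℕ)
    (f : EuclideanSpace ℝ (Fin n) → ℝ) (hf : ContDiff ℝ 2 f)
    (η : ℝ)
    -- the points `x 0, …, x m`, where `x (Fin.last m)` plays the role of `x_k`
    (x : Fin (m + 1) → EuclideanSpace ℝ (Fin n))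
    (α : Fin (m + 1) → ℝ) (hα : ∑ j, α j = 1)
    (y : EuclideanSpace ℝ (Fin n)) (hy : y = ∑ j, α j • x j)
    -- the averaged Hessians along the segments from `x_k` to `x_j` and from `y` to `x_k`
    (Hj : Fin m → (EuclideanSpace ℝ (Fin n) →L[ℝ] EuclideanSpace ℝ (Fin n)))
    (hHj : ∀ j : Fin m, Hj j =
      ∫ t in (0:ℝ)..1, fderiv ℝ (gradient f) (t • x j.castSucc + (1 - t) • x (Fin.last m)))
    (H : EuclideanSpace ℝ (Fin n) →L[ℝ] EuclideanSpace ℝ (Fin n))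
    (hH : H = ∫ t in (0:ℝ)..1, fderiv ℝ (gradient f) (t • x (Fin.last m) + (1 - t) • y)) :
    ((∑ j, α j • (x j - η • gradient f (x j))) - (y - η • gradient f y) =
      η • ∑ j : Fin m, α j.castSucc • ((Hj j - H) (x (Fin.last m) - x j.castSucc))) ∧
    ((∀ z w : EuclideanSpace ℝ (Fin n), fderiv ℝ (gradient f) z = fderiv ℝ (gradient f) w) →
      (∑ j, α j • (x j - η • gradient f (x j))) - (y - η • gradient f y) = 0) := by
  set g := gradient f with hg_def
  set xk := x (Fin.last m) with hxk
  have hg : ContDiff ℝ 1 g := by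
    have h1 : ContDiff ℝ 1 (fderiv ℝ f) := hf.fderiv_right (by norm_num)
    have : g = fun z => (InnerProductSpace.toDual ℝ (EuclideanSpace ℝ (Fin n))).symm
        (fderiv ℝ f z) := rfl
    rw [this]
    exact (InnerProductSpace.toDual ℝ (EuclideanSpace ℝ (Fin n))).symm.contDiff.comp h1
  have h1 : ∀ j : Fin m, (Hj j) (xk - x j.castSucc) = g xk - g (x j.castSucc) := by
    intro j
    have : (Hj j) (xk - x j.castSucc) = -((Hj j) (x j.castSucc - xk)) := by
      rw [← map_neg]; congr 1; abel
    rw [this, hHj j, avg_deriv_apply g hg, neg_sub]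
  have h2 : H (xk - y) = g xk - g y := by
    rw [hH, avg_deriv_apply g hg]
  have hsumxy : ∑ j : Fin m, α j.castSucc • (xk - x j.castSucc) = xk - y := by
    have hfull : ∑ j : Fin (m+1), α j • (xk - x j) = xk - y := by
      simp only [smul_sub, Finset.sum_sub_distrib, ← Finset.sum_smul, hα, one_smul, hy]
    rw [← hfull, Fin.sum_univ_castSucc]
    simp [hxk]
  have hHsum : ∑ j : Fin m, α j.castSucc • H (xk - x j.castSucc) = g xk - g y := by
    rw [← h2, ← hsumxy, map_sum]
    simp [map_smul]
  have main : (∑ j, α j • (x j - η • g (x j))) - (y - η • g y) =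
      η • ∑ j : Fin m, α j.castSucc • ((Hj j - H) (xk - x j.castSucc)) := by
    have hRHS : ∑ j : Fin m, α j.castSucc • ((Hj j - H) (xk - x j.castSucc))
        = (∑ j : Fin m, α j.castSucc • (g xk - g (x j.castSucc))) - (g xk - g y) := by
      simp only [ContinuousLinearMap.sub_apply, smul_sub, Finset.sum_sub_distrib, h1]
      rw [show ∑ j : Fin m, α j.castSucc • H (xk - x j.castSucc) = g xk - g y from hHsum]
    rw [hRHS]
    have hsum1 : ∑ j : Fin m, α j.castSucc • (g xk - g (x j.castSucc))
        = g xk - ∑ j : Fin (m+1), α j • g (x j) := by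
      have hfull : ∑ j : Fin (m+1), α j • (g xk - g (x j))
          = g xk - ∑ j : Fin (m+1), α j • g (x j) := by
        simp only [smul_sub, Finset.sum_sub_distrib, ← Finset.sum_smul, hα, one_smul]
      rw [← hfull, Fin.sum_univ_castSucc]
      simp [hxk]
    rw [hsum1]
    have hxsum : ∑ j : Fin (m+1), α j • x j = y := hy.symm
    simp only [smul_sub, Finset.sum_sub_distrib, hxsum]
    rw [show (∑ j : Fin (m+1), α j • η • g (x j)) = η • ∑ j : Fin (m+1), α j • g (x j) by
      rw [Finset.smul_sum]; congr 1; ext j; rw [smul_comm]]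
    abel
  refine ⟨main, fun hconst => ?_⟩
  rw [main]
  have hzero : ∀ j : Fin m, Hj j = H := by
    intro j
    rw [hHj j, hH]
    have : (fun t : ℝ => fderiv ℝ g (t • x j.castSucc + (1 - t) • xk))
        = fun t : ℝ => fderiv ℝ g (t • xk + (1 - t) • y) := by
      funext t; exact hconst _ _
    rw [this]
  simp [hzero]
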